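/- Let A be a real N×N matrix and b ∈ ℝ^N with rank[b, Ab, …, A^{N−1}b] = N. Then there exists τ̃ > 0, depending only on A, b, N, such that for every 1 ≤ j ≤ N and all times 0 ≤ s_1 < s_2 < … < s_j ≤ τ̃, the vectors e^{−As_1}b, e^{−As_2}b, …, e^{−As_j}b are linearly independent. -/

import Mathlib

open scoped RealInnerProductSpace ENNReal NNReal
open MeasureTheory Filter

noncomputable section

/-- The proximal normal cone to `K` at `x`: vectors `v` such that for some `σ ≥ 0`,
`⟪v, y - x⟫ ≤ σ ‖y - x‖²` for all `y ∈ K`. -/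
def proxNormalCone {H : Type*} [NormedAddCommGroup H] [InnerProductSpace ℝ H]
    (K : Set H) (x : H) : Set H :=
  {v | ∃ σ : ℝ, 0 ≤ σ ∧ ∀ y ∈ K, ⟪v, y - x⟫ ≤ σ * ‖y - x‖ ^ 2}

/-- `K` has locally positive reach: there is a continuous `φ : K → [0,∞)` with
`⟪v, y - x⟫ ≤ φ x ‖v‖ ‖y - x‖²` for all `x, y ∈ K` and `v ∈ N_K(x)`. -/
def HasLocPosReach {H : Type*} [NormedAddCommGroup H] [InnerProductSpace ℝ H]
    (K : Set H) : Prop :=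
  ∃ φ : H → ℝ, ContinuousOn φ K ∧ (∀ x ∈ K, 0 ≤ φ x) ∧
    ∀ x ∈ K, ∀ v ∈ proxNormalCone K x, ∀ y ∈ K, ⟪v, y - x⟫ ≤ φ x * ‖v‖ * ‖y - x‖ ^ 2

/-- `ℝ^N` with the Euclidean inner product. -/
abbrev Euc (N : ℕ) := EuclideanSpace ℝ (Fin N)

/-- The pair `(x, β)` as an element of `E × ℝ` equipped with the L² (inner product) norm. -/
def pairLp {E : Type*} [NormedAddCommGroup E] [InnerProductSpace ℝ E] (x : E) (β : ℝ) :
    WithLp 2 (E × ℝ) := (WithLp.equiv 2 (E × ℝ)).symm (x, β)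

/-- The epigraph of `f` restricted to the domain `D`: `{(x, β) : x ∈ D, β ≥ f x}`. -/
def epigraphOn {E : Type*} [NormedAddCommGroup E] [InnerProductSpace ℝ E]
    (f : E → ℝ) (D : Set E) : Set (WithLp 2 (E × ℝ)) :=
  {p | (WithLp.equiv 2 (E × ℝ) p).1 ∈ D ∧
    f ((WithLp.equiv 2 (E × ℝ) p).1) ≤ (WithLp.equiv 2 (E × ℝ) p).2}

/-- `f` is non-Lipschitz at `x`: there are sequences `xs i ≠ ys i` converging to `x` with
`limsup |f (ys i) - f (xs i)| / ‖ys i - xs i‖ = +∞`. -/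
def NonLipschitzAt {X : Type*} [NormedAddCommGroup X] (f : X → ℝ) (x : X) : Prop :=
  ∃ xs ys : ℕ → X, (∀ i, xs i ≠ ys i) ∧ Tendsto xs atTop (nhds x) ∧ Tendsto ys atTop (nhds x) ∧
    limsup (fun i => ((|f (ys i) - f (xs i)| / ‖ys i - xs i‖ : ℝ) : EReal)) atTop = ⊤

/-- The matrix exponential `e^{tA}` acting on `ℝ^N`. -/
def expA {N : ℕ} (A : Matrix (Fin N) (Fin N) ℝ) (t : ℝ) : Euc N →ₗ[ℝ] Euc N :=
  Matrix.toEuclideanLin (NormedSpace.exp (t • A))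

/-- Normality of the linear system `ẋ = Ax + Bu`: for every column `b i` of `B`,
`rank [b i, A (b i), …, A^{N-1} (b i)] = N`. -/
def IsNormalPair {N M : ℕ} (A : Matrix (Fin N) (Fin N) ℝ) (b : Fin M → Euc N) : Prop :=
  ∀ i, Submodule.span ℝ
    (Set.range fun k : Fin N => Matrix.toEuclideanLin (A ^ (k : ℕ)) (b i)) = ⊤

/-- Admissible controls: measurable with values in `[-1,1]^M`. -/
def IsAdmissible {M : ℕ} (u : ℝ → Fin M → ℝ) : Prop :=
  Measurable u ∧ ∀ t i, u t i ∈ Set.Icc (-1 : ℝ) 1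

/-- The trajectory of `ẏ = Ay + Bu`, `y 0 = x`:
`y t = e^{At} x + ∫₀ᵗ e^{A(t-s)} B u s ds`. -/
def linTraj {N M : ℕ} (A : Matrix (Fin N) (Fin N) ℝ) (b : Fin M → Euc N)
    (x : Euc N) (u : ℝ → Fin M → ℝ) (t : ℝ) : Euc N :=
  expA A t x + ∫ s in (0:ℝ)..t, expA A (t - s) (∑ i, u s i • b i)

/-- The minimum time to reach the origin from `x` for the linear system. -/
def minTime {N M : ℕ} (A : Matrix (Fin N) (Fin N) ℝ) (b : Fin M → Euc N) (x : Euc N) : ℝ :=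
  sInf {t : ℝ | 0 ≤ t ∧ ∃ u, IsAdmissible u ∧ linTraj A b x u t = 0}

/-- The reachable set `R_t = {x : T x ≤ t}`. -/
def Rset {N M : ℕ} (A : Matrix (Fin N) (Fin N) ℝ) (b : Fin M → Euc N) (t : ℝ) : Set (Euc N) :=
  {x | minTime A b x ≤ t}

/-- The minimized Hamiltonian `h(x,ζ) = ⟪ζ, Ax⟫ - ∑ᵢ |⟪ζ, bᵢ⟫|` of the linear system. -/
def hLin {N M : ℕ} (A : Matrix (Fin N) (Fin N) ℝ) (b : Fin M → Euc N) (x ζ : Euc N) : ℝ :=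
  ⟪ζ, Matrix.toEuclideanLin A x⟫ - ∑ i, |⟪ζ, b i⟫|

/-- The set `S` of formula (4.4): points of the form
`x = ∑ᵢ ∫₀ʳ e^{A(t-r)} bᵢ sign ⟪ζ, e^{At} bᵢ⟫ dt` for some `r > 0` and a unit `ζ`
orthogonal to every `bᵢ`. -/
def Sset {N M : ℕ} (A : Matrix (Fin N) (Fin N) ℝ) (b : Fin M → Euc N) : Set (Euc N) :=
  {x | ∃ r : ℝ, 0 < r ∧ ∃ ζ : Euc N, ‖ζ‖ = 1 ∧
    (x = ∑ i, ∫ t in (0:ℝ)..r, Real.sign ⟪ζ, expA A t (b i)⟫ • expA A (t - r) (b i)) ∧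
    ∀ i, ⟪ζ, b i⟫ = 0}

namespace STLI

open NormedSpace Set

attribute [local instance] Matrix.linftyOpNormedRing Matrix.linftyOpNormedAlgebra

variable {N : ℕ}

def Lb (b : Euc N) : Matrix (Fin N) (Fin N) ℝ →ₗ[ℝ] Euc N :=
  (LinearMap.applyₗ b).comp Matrix.toEuclideanLin.toLinearMap

def LCb (b : Euc N) : Matrix (Fin N) (Fin N) ℝ →L[ℝ] Euc N :=
  (Lb b).toContinuousLinearMap

def vecm (A : Matrix (Fin N) (Fin N) ℝ) (b : Euc N) (m : ℕ) (t : ℝ) : Euc N :=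
  LCb b ((-A) ^ m * exp (t • (-A)))

lemma hasDerivAt_vecm (A : Matrix (Fin N) (Fin N) ℝ) (b : Euc N) (m : ℕ) (t : ℝ) :
    HasDerivAt (vecm A b m) (vecm A b (m+1) t) t := by
  have h1 : HasDerivAt (fun u : ℝ => exp (u • (-A))) (exp (t • (-A)) * (-A)) t :=
    hasDerivAt_exp_smul_const (-A) t
  have h2 := h1.const_mul ((-A) ^ m)
  have hc : Commute (-A) (exp (t • (-A))) :=
    (((Commute.refl (-A)).smul_right t).exp_right)
  have he : (-A) ^ m * (exp (t • (-A)) * (-A)) = (-A) ^ (m+1) * exp (t • (-A)) := by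
    rw [← hc.eq, ← mul_assoc, ← pow_succ]
  rw [he] at h2
  exact ((LCb b).hasFDerivAt.comp_hasDerivAt t h2 : _)

lemma continuous_vecm (A : Matrix (Fin N) (Fin N) ℝ) (b : Euc N) (m : ℕ) :
    Continuous (vecm A b m) :=
  continuous_iff_continuousAt.2 fun t => (hasDerivAt_vecm A b m t).continuousAt

lemma vecm_zero (A : Matrix (Fin N) (Fin N) ℝ) (b : Euc N) (t : ℝ) :
    vecm A b 0 t = expA A (-t) b := by
  simp only [vecm, pow_zero, one_mul, expA]
  have : t • (-A) = (-t) • A := by rw [smul_neg, neg_smul]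
  rw [this]
  rfl

lemma vecm_at_zero (A : Matrix (Fin N) (Fin N) ℝ) (b : Euc N) (m : ℕ) :
    vecm A b m 0 = ((-1 : ℝ) ^ m) • Matrix.toEuclideanLin (A ^ m) b := by
  have h1 : (-A) ^ m = ((-1 : ℝ) ^ m) • A ^ m := by
    rw [← smul_pow, neg_one_smul]
  rw [vecm, zero_smul, exp_zero, mul_one, h1, ContinuousLinearMap.map_smul]
  rfl

lemma kalman_ne_zero (A : Matrix (Fin N) (Fin N) ℝ) (b : Euc N)
    (hK : Submodule.span ℝ
      (Set.range fun k : Fin N => Matrix.toEuclideanLin (A ^ (k : ℕ)) b) = ⊤)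
    (ζ : Euc N) (hζ : ζ ≠ 0)
    (h : ∀ k : Fin N, ⟪ζ, Matrix.toEuclideanLin (A ^ (k : ℕ)) b⟫ = 0) : False := by
  have : ∀ x ∈ Submodule.span ℝ
      (Set.range fun k : Fin N => Matrix.toEuclideanLin (A ^ (k : ℕ)) b), ⟪ζ, x⟫ = 0 := by
    intro x hx
    induction hx using Submodule.span_induction with
    | mem x hx => obtain ⟨k, rfl⟩ := hx; exact h k
    | zero => simp
    | add x y _ _ hx hy => rw [inner_add_right, hx, hy, add_zero]
    | smul c x _ hx => rw [inner_smul_right, hx, mul_zero]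
  have h0 : ⟪ζ, ζ⟫ = 0 := this ζ (hK ▸ Submodule.mem_top)
  exact hζ (inner_self_eq_zero.mp h0)

lemma rolle_step {f f' : ℝ → ℝ} (hd : ∀ t, HasDerivAt f (f' t) t) {k : ℕ}
    (s : Fin (k + 1) → ℝ) (hs : StrictMono s) (hz : ∀ i, f (s i) = 0) :
    ∃ s' : Fin k → ℝ, StrictMono s' ∧ (∀ i, s' i ∈ Ioo (s 0) (s (Fin.last k))) ∧
      ∀ i, f' (s' i) = 0 := by
  have H : ∀ i : Fin k, ∃ c ∈ Ioo (s i.castSucc) (s i.succ), f' c = 0 := by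
    intro i
    exact exists_hasDerivAt_eq_zero (hs (show i.castSucc < i.succ from Fin.castSucc_lt_succ))
      (fun x _ => (hd x).continuousAt.continuousWithinAt)
      ((hz _).trans (hz _).symm) (fun x _ => hd x)
  choose s' hmem hz' using H
  refine ⟨s', ?_, ?_, hz'⟩
  · intro i j hij
    have h1 : s' i < s i.succ := (hmem i).2
    have h3 : s j.castSucc < s' j := (hmem j).1
    have h2 : s i.succ ≤ s j.castSucc := by
      apply hs.monotone
      have : (i : ℕ) < (j : ℕ) := hij
      simp only [Fin.le_def, Fin.val_succ, Fin.coe_castSucc]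
      omega
    exact lt_of_lt_of_le h1 (le_trans h2 h3.le)
  · intro i
    exact ⟨lt_of_le_of_lt (hs.monotone (Fin.zero_le _)) (hmem i).1,
      lt_of_lt_of_le (hmem i).2 (hs.monotone (Fin.le_last _))⟩

lemma rolle_chain (F : ℕ → ℝ → ℝ) (hd : ∀ m t, HasDerivAt (F m) (F (m + 1) t) t) :
    ∀ m : ℕ, ∀ k : ℕ, m ≤ k → ∀ s : Fin (k + 1) → ℝ, StrictMono s →
      (∀ i, F 0 (s i) = 0) →
      ∃ t ∈ Icc (s 0) (s (Fin.last k)), F m t = 0 := by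
  intro m
  induction m generalizing F with
  | zero =>
    intro k _ s hs hz
    exact ⟨s 0, ⟨le_refl _, hs.monotone (Fin.zero_le _)⟩, hz 0⟩
  | succ m ih =>
    intro k hmk s hs hz
    obtain ⟨k', rfl⟩ : ∃ k', k = k' + 1 := ⟨k - 1, by omega⟩
    obtain ⟨s', hs', hmem, hz'⟩ := rolle_step (hd 0) s hs hz
    obtain ⟨t, ht, htz⟩ := ih (fun m => F (m + 1)) (fun m t => hd (m + 1) t)
      k' (by omega) s' hs' hz'
    refine ⟨t, ⟨le_trans (hmem _).1.le ht.1, le_trans ht.2 (hmem _).2.le⟩, htz⟩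

lemma key_step {n : ℕ} (A : Matrix (Fin (n+1)) (Fin (n+1)) ℝ) (b : Euc (n+1))
    (τ : ℝ) (hτ : 0 < τ) {j : ℕ} (hj1 : 1 ≤ j) (hjN : j ≤ n + 1)
    (s : Fin j → ℝ) (hs : StrictMono s) (hsIcc : ∀ i, s i ∈ Set.Icc 0 τ)
    (hdep : ¬ LinearIndependent ℝ fun i : Fin j => expA A (-(s i)) b) :
    ∃ ζ : Euc (n+1), ‖ζ‖ = 1 ∧ ∀ m : ℕ, m ≤ n →
      ∃ u ∈ Set.Icc (0:ℝ) (2 * τ), ⟪ζ, vecm A b m u⟫ = 0 := by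
  classical
  set t : Fin (n+1) → ℝ := fun i =>
    if h : (i : ℕ) < j then s ⟨i, h⟩ else τ + ((i : ℕ) + 1 - j : ℕ) * (τ / (n + 1)) with ht_def
  have hτN : (0:ℝ) < τ / (n + 1) := by positivity
  have hts : StrictMono t := by
    intro i1 i2 h12
    have h12' : (i1 : ℕ) < (i2 : ℕ) := h12
    by_cases hi1 : (i1 : ℕ) < j <;> by_cases hi2 : (i2 : ℕ) < j
    · simp only [ht_def, dif_pos hi1, dif_pos hi2]
      exact hs (Fin.mk_lt_mk.mpr h12')
    · simp only [ht_def, dif_pos hi1, dif_neg hi2]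
      have hle : s ⟨i1, hi1⟩ ≤ τ := (hsIcc _).2
      have hpos : (0:ℝ) < ((i2 : ℕ) + 1 - j : ℕ) * (τ / (n + 1)) := by
        apply mul_pos _ hτN
        have h0 : 0 < (i2 : ℕ) + 1 - j := by omega
        exact_mod_cast h0
      linarith
    · omega
    · simp only [ht_def, dif_neg hi1, dif_neg hi2]
      have : (((i1 : ℕ) + 1 - j : ℕ) : ℝ) < (((i2 : ℕ) + 1 - j : ℕ) : ℝ) :=
        Nat.cast_lt.mpr (by omega)
      nlinarith
  have htIcc : ∀ i, t i ∈ Set.Icc (0:ℝ) (2 * τ) := by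
    intro i
    by_cases hi : (i : ℕ) < j
    · simp only [ht_def, dif_pos hi]
      exact ⟨(hsIcc _).1, le_trans (hsIcc _).2 (by linarith)⟩
    · simp only [ht_def, dif_neg hi]
      constructor
      · have : (0:ℝ) ≤ (((i : ℕ) + 1 - j : ℕ) : ℝ) * (τ / (n + 1)) := by positivity
        linarith
      · have hb : (((i : ℕ) + 1 - j : ℕ) : ℝ) ≤ ((n : ℝ) + 1) := by
          have : ((i : ℕ) + 1 - j : ℕ) ≤ n + 1 := by omega
          exact_mod_cast this
        have h2 : (((i : ℕ) + 1 - j : ℕ) : ℝ) * (τ / (n + 1)) ≤ ((n:ℝ) + 1) * (τ / (n + 1)) :=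
          mul_le_mul_of_nonneg_right hb hτN.le
        have h3 : ((n:ℝ) + 1) * (τ / (n + 1)) = τ := by field_simp
        linarith
  have hdep' : ¬ LinearIndependent ℝ (fun i : Fin (n+1) => expA A (-(t i)) b) := by
    intro hLI
    apply hdep
    have h2 := hLI.comp (Fin.castLE hjN) (Fin.castLE_injective hjN)
    have heq : (fun i : Fin j => expA A (-(s i)) b)
        = ((fun i : Fin (n+1) => expA A (-(t i)) b) ∘ Fin.castLE hjN) := by
      funext i
      simp only [Function.comp_apply, ht_def]
      rw [dif_pos (show ((Fin.castLE hjN i : ℕ)) < j from i.isLt)]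
      rfl
    rw [heq]
    exact h2
  set v : Fin (n+1) → Euc (n+1) := fun i => expA A (-(t i)) b with hv
  have hWne : Submodule.span ℝ (Set.range v) ≠ ⊤ := by
    intro hW
    apply hdep'
    rw [linearIndependent_iff_card_eq_finrank_span]
    rw [Set.finrank, hW]
    simp [finrank_top, finrank_euclideanSpace_fin]
  have hbot : (Submodule.span ℝ (Set.range v))ᗮ ≠ ⊥ := by
    rw [Ne, Submodule.orthogonal_eq_bot_iff]
    exact hWne
  obtain ⟨ζ0, hζ0mem, hζ0ne⟩ := (Submodule.ne_bot_iff _).mp hbot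
  set ζ : Euc (n+1) := (‖ζ0‖⁻¹ : ℝ) • ζ0 with hζdef
  have hζnorm : ‖ζ‖ = 1 := norm_smul_inv_norm hζ0ne
  have hζmem : ζ ∈ (Submodule.span ℝ (Set.range v))ᗮ :=
    Submodule.smul_mem _ _ hζ0mem
  have hzeros : ∀ i, ⟪ζ, vecm A b 0 (t i)⟫ = 0 := by
    intro i
    rw [vecm_zero]
    rw [real_inner_comm]
    exact hζmem (expA A (-(t i)) b) (Submodule.subset_span ⟨i, rfl⟩)
  refine ⟨ζ, hζnorm, fun m hm => ?_⟩
  have hd : ∀ m u, HasDerivAt (fun u => ⟪ζ, vecm A b m u⟫) ⟪ζ, vecm A b (m+1) u⟫ u := by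
    intro m u
    exact ((innerSL ℝ ζ).hasFDerivAt.comp_hasDerivAt u (hasDerivAt_vecm A b m u) : _)
  obtain ⟨u, humem, huz⟩ := rolle_chain (fun m u => ⟪ζ, vecm A b m u⟫) hd m n hm t hts hzeros
  exact ⟨u, ⟨le_trans (htIcc 0).1 humem.1, le_trans humem.2 (htIcc (Fin.last n)).2⟩, huz⟩

end STLI

set_option maxHeartbeats 2000000 in
/-- Step 1 in Theorem 7.1. If `rank [b, Ab, …, A^{N-1} b] = N`, then there is
`τ̃ > 0`, depending only on `A, b, N`, such that for every `1 ≤ j ≤ N` and all times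
`0 ≤ s₁ < … < s_j ≤ τ̃` the vectors `e^{-A s₁} b, …, e^{-A s_j} b` are linearly independent. -/
theorem small_time_linear_independence
    {N : ℕ} (A : Matrix (Fin N) (Fin N) ℝ) (b : Euc N)
    (hK : Submodule.span ℝ
      (Set.range fun k : Fin N => Matrix.toEuclideanLin (A ^ (k : ℕ)) b) = ⊤) :
    ∃ τtilde : ℝ, 0 < τtilde ∧
      ∀ j : ℕ, 1 ≤ j → j ≤ N → ∀ s : Fin j → ℝ, StrictMono s →
        (∀ i, s i ∈ Set.Icc 0 τtilde) →
        LinearIndependent ℝ fun i : Fin j => expA A (-(s i)) b := by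
  cases N with
  | zero =>
    exact ⟨1, one_pos, fun j hj1 hj0 => by omega⟩
  | succ n =>
    by_contra hcon
    push_neg at hcon
    -- for each q : ℕ, apply with τ = 1/(q+1)
    have key : ∀ q : ℕ, ∃ ζ : Euc (n+1), ‖ζ‖ = 1 ∧ ∀ m : ℕ, m ≤ n →
        ∃ u ∈ Set.Icc (0:ℝ) (2 * (1 / (q + 1))), ⟪ζ, STLI.vecm A b m u⟫ = 0 := by
      intro q
      have hτ : (0:ℝ) < 1 / (q + 1) := by positivity
      obtain ⟨j, hj1, hjN, s, hs, hsIcc, hdep⟩ := hcon (1 / (q + 1)) hτ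
      exact STLI.key_step A b _ hτ hj1 hjN s hs hsIcc hdep
    choose ζseq hζnorm hzero using key
    have hzero' : ∀ q : ℕ, ∀ m : Fin (n+1),
        ∃ u ∈ Set.Icc (0:ℝ) (2 * (1 / (q + 1))), ⟪ζseq q, STLI.vecm A b (m:ℕ) u⟫ = 0 :=
      fun q m => hzero q m (by omega)
    choose T hTmem hTzero using hzero'
    have hsph : ∀ q, ζseq q ∈ Metric.sphere (0 : Euc (n+1)) 1 := by
      intro q; simpa [mem_sphere_iff_norm] using hζnorm q
    obtain ⟨ζ, hζsph, φ, hφ, hζlim⟩ :=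
      (isCompact_sphere (0 : Euc (n+1)) 1).tendsto_subseq hsph
    have hζnorm1 : ‖ζ‖ = 1 := by simpa [mem_sphere_iff_norm] using hζsph
    have hζne : ζ ≠ 0 := by intro h; rw [h] at hζnorm1; simp at hζnorm1
    apply STLI.kalman_ne_zero A b hK ζ hζne
    intro k
    -- show inner ζ (A^k b) = 0
    have hTlim : Tendsto (fun q => T (φ q) k) atTop (nhds 0) := by
      refine squeeze_zero (g := fun q : ℕ => 2 * (1 / ((q:ℝ) + 1)))
        (fun q => (hTmem (φ q) k).1) (fun q => ?_) ?_
      · refine le_trans (hTmem (φ q) k).2 ?_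
        have hq : q ≤ φ q := hφ.le_apply
        have h1 : ((q:ℝ) + 1) ≤ ((φ q : ℝ) + 1) := by
          have hq' : ((q:ℝ)) ≤ ((φ q : ℝ)) := Nat.cast_le.mpr hq
          linarith
        have h2 : (1 : ℝ) / ((φ q : ℝ) + 1) ≤ 1 / ((q:ℝ) + 1) :=
          one_div_le_one_div_of_le (by positivity) h1
        linarith
      · have := tendsto_one_div_add_atTop_nhds_zero_nat.const_mul (2:ℝ)
        simpa using this
    have hc : Continuous (fun p : Euc (n+1) × ℝ => ⟪p.1, STLI.vecm A b (k:ℕ) p.2⟫) := by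
      exact Continuous.inner continuous_fst
        ((STLI.continuous_vecm A b (k:ℕ)).comp continuous_snd)
    have hlim2 : Tendsto (fun q => ⟪ζseq (φ q), STLI.vecm A b (k:ℕ) (T (φ q) k)⟫)
        atTop (nhds ⟪ζ, STLI.vecm A b (k:ℕ) 0⟫) :=
      by have h := (hc.tendsto (ζ, 0)).comp (hζlim.prodMk_nhds hTlim); exact h
    have hlim3 : Tendsto (fun q => ⟪ζseq (φ q), STLI.vecm A b (k:ℕ) (T (φ q) k)⟫)
        atTop (nhds 0) := by
      exact tendsto_const_nhds.congr (fun q => (hTzero (φ q) k).symm)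
    have h0 : ⟪ζ, STLI.vecm A b (k:ℕ) 0⟫ = 0 := tendsto_nhds_unique hlim2 hlim3
    rw [STLI.vecm_at_zero, inner_smul_right] at h0
    have hne : ((-1:ℝ) ^ (k:ℕ)) ≠ 0 := by
      simp
    exact (mul_eq_zero.mp h0).resolve_left hne
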